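/- Let r ≥ 1, let β ∈ ℂ with β not a nonpositive integer (β ∉ {0,−1,−2,…}), let c_0,…,c_{r−1} be nonzero, pairwise distinct complex numbers with |c_ℓ| < 1 for all ℓ, and let n = (n_0,…,n_{r−1}) ∈ ℕ^r. Then for every ℓ ∈ {0,…,r−1} and every j with 0 ≤ j ≤ n_ℓ−1, the series Σ_{k=0}^∞ M^{β,c}_n(k)·(−k)_j·Γ(k+β)·c_ℓ^k/k! converges absolutely and its sum equals 0. -/

import Mathlib

/-- The rising Pochhammer symbol `(y)_m = y(y+1)⋯(y+m-1)`. -/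
noncomputable def poch (y : ℂ) (m : ℕ) : ℂ := ∏ i ∈ Finset.range m, (y + i)

/-- The explicit type II Meixner--Angelesco polynomial of the first kind
(as a function of `x = z^r`). -/
noncomputable def meixnerAngelesco (r : ℕ) (β : ℂ) (c : Fin r → ℂ) (n : Fin r → ℕ)
    (x : ℂ) : ℂ :=
  ∑ k ∈ Fintype.piFinset (fun i : Fin r => Finset.range (n i + 1)),
    (∏ ℓ : Fin r, ((n ℓ).choose (k ℓ) : ℂ) * (c ℓ) ^ (n ℓ - k ℓ) / (c ℓ - 1) ^ (n ℓ)) *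
      poch (-x) (∑ i, k i) * poch (x + β) ((∑ i, n i) - ∑ i, k i)



noncomputable def Complex.abs : AbsoluteValue ℂ ℝ := NormedField.toAbsoluteValue ℂ

lemma Complex.norm_eq_abs (z : ℂ) : ‖z‖ = Complex.abs z := rfl

lemma Complex.abs_natCast (n : ℕ) : Complex.abs (n : ℂ) = n := by
  rw [← Complex.norm_eq_abs, Complex.norm_natCast]

section MAaux


open Finset Polynomial

lemma poch_succ (y : ℂ) (m : ℕ) : poch y (m + 1) = poch y m * (y + m) := by
  simp [poch, Finset.prod_range_succ]

lemma poch_natCast_neg (x s : ℕ) :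
    poch (-(x : ℂ)) s = (-1) ^ s * (x.descFactorial s : ℂ) := by
  induction s with
  | zero => simp [poch]
  | succ s ih =>
    rw [poch_succ, ih, Nat.descFactorial_succ]
    rcases lt_or_ge x s with h | h
    · rw [Nat.descFactorial_eq_zero_iff_lt.2 h]
      simp
    · have : ((x - s : ℕ) : ℂ) = (x : ℂ) - s := by
        push_cast [Nat.cast_sub h]; ring
      rw [Nat.cast_mul, this]
      ring

lemma poch_eq_zero_of_lt {x s : ℕ} (h : x < s) : poch (-(x : ℂ)) s = 0 := by
  rw [poch_natCast_neg, Nat.descFactorial_eq_zero_iff_lt.2 h]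
  simp

lemma Gamma_poch (z : ℂ) (hz : ∀ i : ℕ, z + i ≠ 0) (b : ℕ) :
    Complex.Gamma (z + b) = Complex.Gamma z * poch z b := by
  induction b with
  | zero => simp [poch]
  | succ b ih =>
    have h1 : z + ((b : ℂ) + 1) = (z + b) + 1 := by ring
    have h2 : z + b ≠ 0 := hz b
    rw [show ((b + 1 : ℕ) : ℂ) = (b : ℂ) + 1 by push_cast; ring, h1,
      Complex.Gamma_add_one _ h2, ih, poch_succ]
    ring

lemma abs_poch_le (y : ℂ) (m : ℕ) :
    Complex.abs (poch y m) ≤ (Complex.abs y + m) ^ m := by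
  rw [poch, map_prod]
  calc ∏ i ∈ range m, Complex.abs (y + i)
      ≤ ∏ i ∈ range m, (Complex.abs y + m) := by
        apply Finset.prod_le_prod (fun i _ => AbsoluteValue.nonneg _ _)
        intro i hi
        calc Complex.abs (y + i) ≤ Complex.abs y + Complex.abs (i : ℂ) := by
              exact AbsoluteValue.add_le _ _ _
          _ = Complex.abs y + i := by rw [Complex.abs_natCast]
          _ ≤ Complex.abs y + m := by
              have := Finset.mem_range.mp hi
              have : (i : ℝ) ≤ m := by exact_mod_cast this.le
              linarith
    _ = (Complex.abs y + m) ^ m := by rw [Finset.prod_const, Finset.card_range]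
open Finset

-- (M + k)! ≤ (M + k)^M * k!
lemma fact_le_pow_mul_fact (M : ℕ) : ∀ k : ℕ, (M + k).factorial ≤ (M + k) ^ M * k.factorial := by
  induction M with
  | zero => intro k; simp
  | succ M ih =>
    intro k
    have h1 : M + 1 + k = M + (k + 1) := by omega
    calc (M + 1 + k).factorial = (M + (k + 1)).factorial := by rw [h1]
      _ ≤ (M + (k + 1)) ^ M * (k + 1).factorial := ih (k + 1)
      _ = (M + k + 1) ^ M * ((k + 1) * k.factorial) := by
          rw [Nat.factorial_succ]; ring_nf
      _ ≤ (M + k + 1) ^ M * ((M + k + 1) * k.factorial) := by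
          apply Nat.mul_le_mul_left
          apply Nat.mul_le_mul_right
          omega
      _ = (M + 1 + k) ^ (M + 1) * k.factorial := by ring_nf

lemma fact_mul_prod (M : ℕ) : ∀ k : ℕ,
    M.factorial * ∏ i ∈ range k, (M + 1 + i) = (M + k).factorial := by
  intro k
  induction k with
  | zero => simp
  | succ k ih =>
    rw [Finset.prod_range_succ, ← Nat.mul_assoc, ih]
    have : M + (k + 1) = (M + k) + 1 := by omega
    rw [this, Nat.factorial_succ]
    ring_nf

-- growth of Gamma along naturals
lemma abs_Gamma_nat_add_le (a : ℂ) (ha : ∀ i : ℕ, a + i ≠ 0) :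
    ∃ C : ℝ, 0 ≤ C ∧ ∃ E : ℕ, ∀ k : ℕ,
      Complex.abs (Complex.Gamma ((k : ℂ) + a)) ≤ C * ((k : ℝ) + 1) ^ E * k.factorial := by
  set M : ℕ := ⌈Complex.abs a⌉₊ with hM
  refine ⟨Complex.abs (Complex.Gamma a) * ((M : ℝ) + 1) ^ M, by positivity, M, fun k => ?_⟩
  have h0 : (k : ℂ) + a = a + k := by ring
  rw [h0, Gamma_poch a ha k, map_mul]
  have h1 : Complex.abs (poch a k) ≤ ((M : ℝ) + 1) ^ M * ((k : ℝ) + 1) ^ M * k.factorial := by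
    have h2 : Complex.abs (poch a k) ≤ ∏ i ∈ range k, ((M : ℝ) + 1 + i) := by
      rw [poch, map_prod]
      apply Finset.prod_le_prod (fun i _ => AbsoluteValue.nonneg _ _)
      intro i _
      calc Complex.abs (a + i) ≤ Complex.abs a + Complex.abs (i : ℂ) :=
            AbsoluteValue.add_le _ _ _
        _ = Complex.abs a + i := by rw [Complex.abs_natCast]
        _ ≤ (M : ℝ) + 1 + i := by
            have := Nat.le_ceil (Complex.abs a)
            rw [← hM] at this
            linarith
    have h3 : (∏ i ∈ range k, ((M : ℝ) + 1 + i)) ≤ ((M + k).factorial : ℝ) := by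
      have := fact_mul_prod M k
      have hcast : (∏ i ∈ range k, ((M : ℝ) + 1 + i)) =
          ((∏ i ∈ range k, (M + 1 + i) : ℕ) : ℝ) := by
        push_cast; ring_nf
      rw [hcast]
      exact_mod_cast Nat.le_of_dvd (Nat.factorial_pos _) ⟨M.factorial, by rw [← this]; ring⟩
    have h4 : ((M + k).factorial : ℝ) ≤ ((M + k) ^ M * k.factorial : ℕ) := by
      exact_mod_cast fact_le_pow_mul_fact M k
    have h5 : (((M + k) ^ M * k.factorial : ℕ) : ℝ) ≤
        ((M : ℝ) + 1) ^ M * ((k : ℝ) + 1) ^ M * k.factorial := by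
      push_cast
      have : ((M : ℝ) + k) ^ M ≤ (((M : ℝ) + 1) * ((k : ℝ) + 1)) ^ M := by
        apply pow_le_pow_left₀ (by positivity)
        nlinarith [Nat.cast_nonneg (α := ℝ) M, Nat.cast_nonneg (α := ℝ) k]
      rw [mul_pow] at this
      have hf : (0 : ℝ) ≤ k.factorial := by positivity
      nlinarith [this]
    linarith
  calc Complex.abs (Complex.Gamma a) * Complex.abs (poch a k)
      ≤ Complex.abs (Complex.Gamma a) *
        (((M : ℝ) + 1) ^ M * ((k : ℝ) + 1) ^ M * k.factorial) := by
        apply mul_le_mul_of_nonneg_left h1 (AbsoluteValue.nonneg _ _)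
    _ = Complex.abs (Complex.Gamma a) * ((M : ℝ) + 1) ^ M * ((k : ℝ) + 1) ^ M * k.factorial := by
        ring

lemma summable_poly_geom (E : ℕ) {q : ℝ} (h0 : 0 < q) (h1 : q < 1) :
    Summable (fun k : ℕ => ((k : ℝ) + 1) ^ E * q ^ k) := by
  have h : Summable (fun n : ℕ => (n : ℝ) ^ E * q ^ n) :=
    summable_pow_mul_geometric_of_norm_lt_one E (by rwa [Real.norm_eq_abs, abs_of_pos h0])
  have h2 : Summable (fun n : ℕ => ((n + 1 : ℕ) : ℝ) ^ E * q ^ (n + 1)) :=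
    (summable_nat_add_iff 1).mpr h
  have h3 := h2.mul_left q⁻¹
  apply h3.congr
  intro n
  push_cast
  field_simp
  ring
lemma summable_abs_aux (a : ℂ) (ha : ∀ i : ℕ, a + i ≠ 0) {cl : ℂ}
    (h0 : cl ≠ 0) (h1 : Complex.abs cl < 1)
    (g : ℕ → ℂ) (Cg : ℝ) (Eg : ℕ) (hg : ∀ k, Complex.abs (g k) ≤ Cg * ((k : ℝ) + 1) ^ Eg) :
    Summable (fun k : ℕ => Complex.abs
      (g k * (Complex.Gamma ((k : ℂ) + a) * cl ^ k / (k.factorial : ℂ)))) := by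
  obtain ⟨C, hC0, E, hC⟩ := abs_Gamma_nat_add_le a ha
  set q : ℝ := Complex.abs cl with hq
  have hq0 : 0 < q := AbsoluteValue.pos _ h0
  have hCg0 : 0 ≤ Cg := by
    have h := (AbsoluteValue.nonneg Complex.abs (g 0)).trans (hg 0)
    simpa using h
  have key : ∀ k : ℕ, Complex.abs
      (g k * (Complex.Gamma ((k : ℂ) + a) * cl ^ k / (k.factorial : ℂ)))
      ≤ (Cg * C) * (((k : ℝ) + 1) ^ (Eg + E) * q ^ k) := by
    intro k
    have hfpos : (0 : ℝ) < (k.factorial : ℝ) := by exact_mod_cast k.factorial_pos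
    have habs : Complex.abs (g k * (Complex.Gamma ((k : ℂ) + a) * cl ^ k / (k.factorial : ℂ)))
        = Complex.abs (g k) * (Complex.abs (Complex.Gamma ((k : ℂ) + a)) * q ^ k
          / (k.factorial : ℝ)) := by
      rw [map_mul, map_div₀, map_mul, map_pow]
      norm_num [Complex.abs_natCast]
      exact Or.inl rfl
    rw [habs]
    calc Complex.abs (g k) * (Complex.abs (Complex.Gamma ((k : ℂ) + a)) * q ^ k
          / (k.factorial : ℝ))
        ≤ (Cg * ((k : ℝ) + 1) ^ Eg) * ((C * ((k : ℝ) + 1) ^ E * (k.factorial : ℝ)) * q ^ k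
          / (k.factorial : ℝ)) := by
          have hdiv : Complex.abs (Complex.Gamma ((k : ℂ) + a)) * q ^ k / (k.factorial : ℝ)
              ≤ (C * ((k : ℝ) + 1) ^ E * (k.factorial : ℝ)) * q ^ k / (k.factorial : ℝ) :=
            (div_le_div_iff_of_pos_right hfpos).mpr
              (mul_le_mul_of_nonneg_right (hC k) (by positivity))
          exact mul_le_mul (hg k) hdiv (by positivity) (by positivity)
      _ = (Cg * C) * (((k : ℝ) + 1) ^ (Eg + E) * q ^ k) := by
          field_simp
          ring
  have hs : Summable (fun k : ℕ => (Cg * C) * (((k : ℝ) + 1) ^ (Eg + E) * q ^ k)) :=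
    (summable_poly_geom (Eg + E) hq0 h1).mul_left _
  exact Summable.of_nonneg_of_le (fun k => AbsoluteValue.nonneg _ _) key hs

lemma descFactorial_add_eq (s m j : ℕ) :
    (s + m).descFactorial j =
      ∑ i ∈ Finset.range (j + 1), j.choose i * s.descFactorial i * m.descFactorial (j - i) := by
  have hv := Nat.add_choose_eq s m j
  rw [Finset.Nat.sum_antidiagonal_eq_sum_range_succ_mk] at hv
  rw [Nat.descFactorial_eq_factorial_mul_choose, hv, Finset.mul_sum]
  apply Finset.sum_congr rfl
  intro i hi
  have hij : i ≤ j := Nat.lt_succ_iff.mp (Finset.mem_range.mp hi)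
  rw [Nat.descFactorial_eq_factorial_mul_choose s i,
    Nat.descFactorial_eq_factorial_mul_choose m (j - i),
    ← Nat.choose_mul_factorial_mul_factorial hij]
  ring
section CoreLemmas
open Finset

variable {β : ℂ} {cl : ℂ}

lemma beta_nat_ne (hβ : ∀ m : ℕ, β ≠ -(m : ℂ)) : ∀ i : ℕ, β + (i : ℂ) ≠ 0 := by
  intro i h
  exact hβ i (by linear_combination h)

lemma betaN_shift_ne (hβ : ∀ m : ℕ, β ≠ -(m : ℂ)) (N : ℕ) :
    ∀ i : ℕ, (β + (N : ℂ)) + (i : ℂ) ≠ 0 := by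
  intro i h
  apply hβ (N + i)
  push_cast
  linear_combination h

lemma natadd_beta_shift_ne (hβ : ∀ m : ℕ, β ≠ -(m : ℂ)) (z : ℕ) :
    ∀ i : ℕ, ((z : ℂ) + β) + (i : ℂ) ≠ 0 := by
  intro i h
  apply hβ (z + i)
  push_cast
  linear_combination h

lemma summable_F (hβ : ∀ m : ℕ, β ≠ -(m : ℂ)) (h0 : cl ≠ 0)
    (h1 : Complex.abs cl < 1) (N d : ℕ) :
    Summable (fun m : ℕ => (m.descFactorial d : ℂ) *
      (Complex.Gamma ((m : ℂ) + (β + (N : ℂ))) * cl ^ m / (m.factorial : ℂ))) := by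
  apply Summable.of_norm
  simp only [Complex.norm_eq_abs]
  apply summable_abs_aux (β + (N : ℂ)) (betaN_shift_ne hβ N) h0 h1
    (fun m => (m.descFactorial d : ℂ)) 1 d
  intro m
  rw [Complex.abs_natCast, one_mul]
  calc (m.descFactorial d : ℝ) ≤ ((m ^ d : ℕ) : ℝ) := by
        exact_mod_cast Nat.descFactorial_le_pow m d
    _ ≤ ((m : ℝ) + 1) ^ d := by
        push_cast
        exact pow_le_pow_left₀ (by positivity) (by linarith) d

lemma summable_core_abs (hβ : ∀ m : ℕ, β ≠ -(m : ℂ)) (h0 : cl ≠ 0)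
    (h1 : Complex.abs cl < 1) (s b d : ℕ) :
    Summable (fun k : ℕ => Complex.abs
      (poch (-(k : ℂ)) s * poch ((k : ℂ) + β) b * poch (-(k : ℂ)) d *
        (Complex.Gamma ((k : ℂ) + β) * cl ^ k / (k.factorial : ℂ)))) := by
  apply summable_abs_aux β (beta_nat_ne hβ) h0 h1
    (fun k => poch (-(k : ℂ)) s * poch ((k : ℂ) + β) b * poch (-(k : ℂ)) d)
    (((s : ℝ) + 1) ^ s * (Complex.abs β + b + 1) ^ b * ((d : ℝ) + 1) ^ d) (s + b + d)
  intro k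
  have habsneg : Complex.abs (-(k : ℂ)) = (k : ℝ) := by
    rw [map_neg_eq_map, Complex.abs_natCast]
  have e1 : ∀ t : ℕ, Complex.abs (poch (-(k : ℂ)) t) ≤ ((t : ℝ) + 1) ^ t * ((k : ℝ) + 1) ^ t := by
    intro t
    calc Complex.abs (poch (-(k : ℂ)) t) ≤ (Complex.abs (-(k : ℂ)) + t) ^ t := abs_poch_le _ _
      _ = ((k : ℝ) + t) ^ t := by rw [habsneg]
      _ ≤ (((t : ℝ) + 1) * ((k : ℝ) + 1)) ^ t := by
          apply pow_le_pow_left₀ (by positivity)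
          nlinarith [Nat.cast_nonneg (α := ℝ) k, Nat.cast_nonneg (α := ℝ) t]
      _ = ((t : ℝ) + 1) ^ t * ((k : ℝ) + 1) ^ t := mul_pow _ _ _
  have e2 : Complex.abs (poch ((k : ℂ) + β) b)
      ≤ (Complex.abs β + b + 1) ^ b * ((k : ℝ) + 1) ^ b := by
    calc Complex.abs (poch ((k : ℂ) + β) b) ≤ (Complex.abs ((k : ℂ) + β) + b) ^ b :=
          abs_poch_le _ _
      _ ≤ ((Complex.abs β + b + 1) * ((k : ℝ) + 1)) ^ b := by
          apply pow_le_pow_left₀ (by positivity)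
          have hab : Complex.abs ((k : ℂ) + β) ≤ (k : ℝ) + Complex.abs β := by
            calc Complex.abs ((k : ℂ) + β) ≤ Complex.abs (k : ℂ) + Complex.abs β :=
                  AbsoluteValue.add_le _ _ _
              _ = (k : ℝ) + Complex.abs β := by rw [Complex.abs_natCast]
          have h2 : (0 : ℝ) ≤ Complex.abs β := AbsoluteValue.nonneg _ _
          have h3 : (0 : ℝ) ≤ (k : ℝ) := Nat.cast_nonneg _
          have h4 : (0 : ℝ) ≤ (b : ℝ) := Nat.cast_nonneg _
          nlinarith
      _ = (Complex.abs β + b + 1) ^ b * ((k : ℝ) + 1) ^ b := mul_pow _ _ _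
  calc Complex.abs (poch (-(k : ℂ)) s * poch ((k : ℂ) + β) b * poch (-(k : ℂ)) d)
      = Complex.abs (poch (-(k : ℂ)) s) * Complex.abs (poch ((k : ℂ) + β) b) *
        Complex.abs (poch (-(k : ℂ)) d) := by rw [map_mul, map_mul]
    _ ≤ (((s : ℝ) + 1) ^ s * ((k : ℝ) + 1) ^ s) *
        ((Complex.abs β + b + 1) ^ b * ((k : ℝ) + 1) ^ b) *
        (((d : ℝ) + 1) ^ d * ((k : ℝ) + 1) ^ d) := by
        have p1 := e1 s
        have p2 := e2
        have p3 := e1 d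
        have n1 : (0:ℝ) ≤ Complex.abs (poch (-(k : ℂ)) s) := AbsoluteValue.nonneg _ _
        have n2 : (0:ℝ) ≤ Complex.abs (poch ((k : ℂ) + β) b) := AbsoluteValue.nonneg _ _
        have n3 : (0:ℝ) ≤ Complex.abs (poch (-(k : ℂ)) d) := AbsoluteValue.nonneg _ _
        have q1 : (0:ℝ) ≤ ((s : ℝ) + 1) ^ s * ((k : ℝ) + 1) ^ s := by positivity
        have q2 : (0:ℝ) ≤ (Complex.abs β + b + 1) ^ b * ((k : ℝ) + 1) ^ b := by positivity
        exact mul_le_mul (mul_le_mul p1 p2 n2 q1) p3 n3 (by positivity)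
    _ = ((s : ℝ) + 1) ^ s * (Complex.abs β + b + 1) ^ b * ((d : ℝ) + 1) ^ d *
        ((k : ℝ) + 1) ^ (s + b + d) := by
        rw [pow_add, pow_add]
        ring

lemma summable_core (hβ : ∀ m : ℕ, β ≠ -(m : ℂ)) (h0 : cl ≠ 0)
    (h1 : Complex.abs cl < 1) (s b d : ℕ) :
    Summable (fun k : ℕ => poch (-(k : ℂ)) s * poch ((k : ℂ) + β) b * poch (-(k : ℂ)) d *
      (Complex.Gamma ((k : ℂ) + β) * cl ^ k / (k.factorial : ℂ))) :=
  Summable.of_norm (by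
    simpa only [Complex.norm_eq_abs] using summable_core_abs hβ h0 h1 s b d)

end CoreLemmas
section CoreTsum
open Finset

lemma core_tsum {β : ℂ} {cl : ℂ} (hβ : ∀ m : ℕ, β ≠ -(m : ℂ)) (h0 : cl ≠ 0)
    (h1 : Complex.abs cl < 1) (N s j : ℕ) (hs : s ≤ N) :
    ∑' k : ℕ, poch (-(k : ℂ)) s * poch ((k : ℂ) + β) (N - s) * poch (-(k : ℂ)) j *
        (Complex.Gamma ((k : ℂ) + β) * cl ^ k / (k.factorial : ℂ))
      = (-1) ^ (s + j) * cl ^ s * ∑ i ∈ Finset.range (j + 1),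
          (j.choose i : ℂ) * (s.descFactorial i : ℂ) *
          ∑' m : ℕ, ((m.descFactorial (j - i) : ℂ) *
            (Complex.Gamma ((m : ℂ) + (β + (N : ℂ))) * cl ^ m / (m.factorial : ℂ))) := by
  set f : ℕ → ℂ := fun k => poch (-(k : ℂ)) s * poch ((k : ℂ) + β) (N - s) *
    poch (-(k : ℂ)) j * (Complex.Gamma ((k : ℂ) + β) * cl ^ k / (k.factorial : ℂ)) with hf
  -- shift the sum by s
  have hshift : ∑' k : ℕ, f k = ∑' m : ℕ, f (m + s) := by
    refine (Function.Injective.tsum_eq (add_left_injective s) ?_).symm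
    intro k hk
    rcases le_or_gt s k with h | h
    · exact ⟨k - s, by show k - s + s = k; omega⟩
    · exfalso
      apply hk
      simp only [hf, poch_eq_zero_of_lt h, zero_mul]
  rw [hshift]
  -- pointwise identity
  have hpt : ∀ m : ℕ, f (m + s) = (-1) ^ (s + j) * cl ^ s *
      ∑ i ∈ Finset.range (j + 1), (j.choose i : ℂ) * (s.descFactorial i : ℂ) *
        ((m.descFactorial (j - i) : ℂ) *
          (Complex.Gamma ((m : ℂ) + (β + (N : ℂ))) * cl ^ m / (m.factorial : ℂ))) := by
    intro m
    have hms : ((m + s : ℕ) : ℂ) = (m : ℂ) + (s : ℂ) := by push_cast; ring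
    have hG : Complex.Gamma (((m + s : ℕ) : ℂ) + β) * poch (((m + s : ℕ) : ℂ) + β) (N - s)
        = Complex.Gamma ((m : ℂ) + (β + (N : ℂ))) := by
      rw [← Gamma_poch (((m + s : ℕ) : ℂ) + β) (natadd_beta_shift_ne hβ (m + s)) (N - s)]
      congr 1
      push_cast [Nat.cast_sub hs]
      ring
    have step1 : f (m + s) = (-1 : ℂ) ^ (s + j) * ((m + s).descFactorial s : ℂ) *
        ((m + s).descFactorial j : ℂ) * Complex.Gamma ((m : ℂ) + (β + (N : ℂ))) *
        cl ^ (m + s) / (((m + s).factorial : ℕ) : ℂ) := by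
      rw [hf]
      simp only
      rw [poch_natCast_neg (m + s) s, poch_natCast_neg (m + s) j, ← hG, pow_add]
      ring
    have hBsum : ((m + s).descFactorial j : ℂ) =
        ∑ i ∈ Finset.range (j + 1), (j.choose i : ℂ) * (s.descFactorial i : ℂ) *
          (m.descFactorial (j - i) : ℂ) := by
      rw [add_comm m s, descFactorial_add_eq]
      push_cast
      rfl
    have hD : ((m + s).descFactorial s : ℂ) * (m.factorial : ℂ) = ((m + s).factorial : ℂ) := by
      have h := Nat.factorial_mul_descFactorial (show s ≤ m + s by omega)
      rw [Nat.add_sub_cancel] at h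
      exact_mod_cast by rw [mul_comm]; exact_mod_cast congrArg (Nat.cast (R := ℂ)) h
    have hmfac : (m.factorial : ℂ) ≠ 0 := by exact_mod_cast m.factorial_ne_zero
    have hmsfac : ((m + s).factorial : ℂ) ≠ 0 := by exact_mod_cast (m + s).factorial_ne_zero
    rw [step1, hBsum]
    simp only [Finset.mul_sum, Finset.sum_mul, Finset.sum_div]
    apply Finset.sum_congr rfl
    intro i _
    field_simp
    rw [← hD]
    ring
  rw [tsum_congr hpt, tsum_mul_left]
  congr 1
  rw [Summable.tsum_finsetSum fun i _ =>
    ((summable_F hβ h0 h1 N (j - i)).mul_left ((j.choose i : ℂ) * (s.descFactorial i : ℂ)))]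
  exact Finset.sum_congr rfl fun i _ => tsum_mul_left

end CoreTsum
section PolyPart
open Finset Polynomial

lemma expand_P (r : ℕ) (c : Fin r → ℂ) (n : Fin r → ℕ) :
    (∏ m : Fin r, (X + C (c m)) ^ (n m)) =
      ∑ κ ∈ Fintype.piFinset (fun m : Fin r => Finset.range (n m + 1)),
        C (∏ m, ((n m).choose (κ m) : ℂ) * (c m) ^ (n m - κ m)) * X ^ (∑ m, κ m) := by
  have h1 : ∀ m : Fin r, (X + C (c m)) ^ (n m) =
      ∑ k ∈ Finset.range (n m + 1),
        C (((n m).choose k : ℂ) * (c m) ^ (n m - k)) * X ^ k := by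
    intro m
    rw [add_pow]
    apply Finset.sum_congr rfl
    intro k _
    rw [C_mul, C_pow, C_eq_natCast]
    ring
  rw [Finset.prod_congr rfl fun m _ => h1 m, Finset.prod_univ_sum]
  apply Finset.sum_congr rfl
  intro κ _
  rw [Finset.prod_mul_distrib, Finset.prod_pow_eq_pow_sum, map_prod]

lemma eval_iterate (r : ℕ) (c : Fin r → ℂ) (n : Fin r → ℕ) (i : ℕ) (t : ℂ) :
    (Polynomial.derivative^[i] (∏ m : Fin r, (X + C (c m)) ^ (n m))).eval t * t ^ i =
      ∑ κ ∈ Fintype.piFinset (fun m : Fin r => Finset.range (n m + 1)),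
        (∏ m, ((n m).choose (κ m) : ℂ) * (c m) ^ (n m - κ m)) *
          ((∑ m, κ m).descFactorial i : ℂ) * t ^ (∑ m, κ m) := by
  rw [expand_P, iterate_derivative_sum, eval_finset_sum, Finset.sum_mul]
  apply Finset.sum_congr rfl
  intro κ _
  rw [iterate_derivative_C_mul, iterate_derivative_X_pow_eq_natCast_mul, eval_mul, eval_C,
    eval_mul, eval_natCast, eval_pow, eval_X]
  rcases le_or_gt i (∑ m, κ m) with h | h
  · rw [← mul_assoc]
    rw [mul_assoc _ _ (t ^ i), ← pow_add, Nat.sub_add_cancel h]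
  · rw [Nat.descFactorial_eq_zero_iff_lt.2 h]
    simp

lemma dvd_iterate (a : ℂ) (nl : ℕ) :
    ∀ i : ℕ, i ≤ nl → ∀ Q : ℂ[X], ∃ R : ℂ[X],
      Polynomial.derivative^[i] ((X + C a) ^ nl * Q) = (X + C a) ^ (nl - i) * R := by
  intro i
  induction i with
  | zero => intro _ Q; exact ⟨Q, by simp⟩
  | succ i ih =>
    intro hi Q
    obtain ⟨R, hR⟩ := ih (by omega) Q
    refine ⟨C ((nl - i : ℕ) : ℂ) * R + (X + C a) * Polynomial.derivative R, ?_⟩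
    rw [Function.iterate_succ_apply', hR, derivative_mul, derivative_pow, derivative_X_add_C,
      mul_one]
    have h1 : nl - i = (nl - (i + 1)) + 1 := by omega
    rw [h1, C_eq_natCast]
    push_cast
    ring

lemma key_vanish (r : ℕ) (c : Fin r → ℂ) (n : Fin r → ℕ) (ℓ : Fin r) (i : ℕ) (hi : i < n ℓ) :
    ∑ κ ∈ Fintype.piFinset (fun m : Fin r => Finset.range (n m + 1)),
      (∏ m, ((n m).choose (κ m) : ℂ) * (c m) ^ (n m - κ m)) *
        ((∑ m, κ m).descFactorial i : ℂ) * (-(c ℓ)) ^ (∑ m, κ m) = 0 := by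
  rw [← eval_iterate r c n i (-(c ℓ))]
  have hzero : (Polynomial.derivative^[i] (∏ m : Fin r, (X + C (c m)) ^ (n m))).eval (-(c ℓ))
      = 0 := by
    rw [← Finset.mul_prod_erase Finset.univ _ (Finset.mem_univ ℓ)]
    obtain ⟨R, hR⟩ := dvd_iterate (c ℓ) (n ℓ) i (le_of_lt hi) _
    rw [hR, eval_mul, eval_pow, eval_add, eval_X, eval_C, neg_add_cancel,
      zero_pow (by omega), zero_mul]
  rw [hzero, zero_mul]

end PolyPart

end MAaux

/-- Orthogonality of the type II Meixner--Angelesco polynomials of the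
first kind: for `β` not a nonpositive integer and nonzero pairwise distinct `c_ℓ` with
`|c_ℓ| < 1`, the series `∑_{k=0}^∞ M^{β,c}_n(k) (-k)_j Γ(k+β) c_ℓ^k / k!` converges
absolutely and equals `0` for all `0 ≤ j ≤ n_ℓ - 1`. -/
theorem meixner_angelesco_orthogonality (r : ℕ) (hr : 1 ≤ r) (β : ℂ)
    (hβ : ∀ m : ℕ, β ≠ -(m : ℂ)) (c : Fin r → ℂ) (hc0 : ∀ ℓ, c ℓ ≠ 0)
    (hdist : ∀ i j : Fin r, i ≠ j → c i ≠ c j) (hc1 : ∀ ℓ, ‖c ℓ‖ < 1)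
    (n : Fin r → ℕ) (ℓ : Fin r) (j : ℕ) (hj : j < n ℓ) :
    Summable (fun k : ℕ => ‖
      (meixnerAngelesco r β c n (k : ℂ) * poch (-(k : ℂ)) j *
        (Complex.Gamma ((k : ℂ) + β) * c ℓ ^ k / (k.factorial : ℂ)))‖) ∧
    ∑' k : ℕ, meixnerAngelesco r β c n (k : ℂ) * poch (-(k : ℂ)) j *
      (Complex.Gamma ((k : ℂ) + β) * c ℓ ^ k / (k.factorial : ℂ)) = 0 := by
  classical
  have h0 : c ℓ ≠ 0 := hc0 ℓ
  have h1 : Complex.abs (c ℓ) < 1 := hc1 ℓ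
  set K := Fintype.piFinset (fun i : Fin r => Finset.range (n i + 1)) with hK
  set N : ℕ := ∑ i, n i with hN
  set S : (Fin r → ℕ) → ℕ := fun κ => ∑ m, κ m with hS
  set W : (Fin r → ℕ) → ℂ :=
    fun κ => ∏ m, ((n m).choose (κ m) : ℂ) * (c m) ^ (n m - κ m) / (c m - 1) ^ (n m) with hW
  set g : (Fin r → ℕ) → ℕ → ℂ := fun κ k => W κ *
    (poch (-(k : ℂ)) (S κ) * poch ((k : ℂ) + β) (N - S κ) * poch (-(k : ℂ)) j *
      (Complex.Gamma ((k : ℂ) + β) * c ℓ ^ k / (k.factorial : ℂ))) with hg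
  have hterm : ∀ k : ℕ,
      meixnerAngelesco r β c n (k : ℂ) * poch (-(k : ℂ)) j *
        (Complex.Gamma ((k : ℂ) + β) * c ℓ ^ k / (k.factorial : ℂ)) = ∑ κ ∈ K, g κ k := by
    intro k
    rw [meixnerAngelesco, Finset.sum_mul, Finset.sum_mul, ← hK]
    apply Finset.sum_congr rfl
    intro κ _
    simp only [hg, hW, hS, hN]
    ring
  have hSle : ∀ κ ∈ K, S κ ≤ N := by
    intro κ hκ
    apply Finset.sum_le_sum
    intro m _
    have := Fintype.mem_piFinset.mp hκ m
    have := Finset.mem_range.mp this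
    omega
  -- summability, κ by κ
  have habs : ∀ κ ∈ K, Summable (fun k => Complex.abs (g κ k)) := by
    intro κ _
    have h := (summable_core_abs hβ h0 h1 (S κ) (N - S κ) j).mul_left (Complex.abs (W κ))
    apply h.congr
    intro k
    rw [hg]
    simp only [map_mul]
  have hsummg : ∀ κ ∈ K, Summable (fun k => g κ k) := by
    intro κ hκ
    exact Summable.of_norm (by
      simpa only [Complex.norm_eq_abs] using habs κ hκ)
  constructor
  · -- absolute summability
    simp only [Complex.norm_eq_abs]
    have hsum1 : Summable (fun k => ∑ κ ∈ K, Complex.abs (g κ k)) := summable_sum habs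
    apply Summable.of_nonneg_of_le (fun k => AbsoluteValue.nonneg _ _) _ hsum1
    intro k
    rw [hterm k]
    exact AbsoluteValue.sum_le _ _ _
  · -- the value
    rw [tsum_congr hterm, Summable.tsum_finsetSum hsummg]
    -- evaluate each inner sum
    have hval : ∀ κ ∈ K, ∑' k : ℕ, g κ k =
        W κ * ((-1) ^ (S κ + j) * c ℓ ^ (S κ) * ∑ i ∈ Finset.range (j + 1),
          (j.choose i : ℂ) * ((S κ).descFactorial i : ℂ) *
          ∑' m : ℕ, ((m.descFactorial (j - i) : ℂ) *
            (Complex.Gamma ((m : ℂ) + (β + (N : ℂ))) * c ℓ ^ m / (m.factorial : ℂ)))) := by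
      intro κ hκ
      rw [hg]
      simp only []
      rw [tsum_mul_left, core_tsum hβ h0 h1 N (S κ) j (hSle κ hκ)]
    rw [Finset.sum_congr rfl hval]
    -- reorganize into Σ_i (const_i * Σ_κ V κ * desc * (-cℓ)^S)
    set D : ℂ := ∏ m, (c m - 1) ^ (n m) with hD
    set V : (Fin r → ℕ) → ℂ :=
      fun κ => ∏ m, ((n m).choose (κ m) : ℂ) * (c m) ^ (n m - κ m) with hV
    have hWV : ∀ κ, W κ = V κ / D := by
      intro κ
      rw [hW, hV, hD]
      simp only []
      rw [Finset.prod_div_distrib]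
    have hstep : ∀ κ ∈ K,
        W κ * ((-1) ^ (S κ + j) * c ℓ ^ (S κ) * ∑ i ∈ Finset.range (j + 1),
          (j.choose i : ℂ) * ((S κ).descFactorial i : ℂ) *
          ∑' m : ℕ, ((m.descFactorial (j - i) : ℂ) *
            (Complex.Gamma ((m : ℂ) + (β + (N : ℂ))) * c ℓ ^ m / (m.factorial : ℂ))))
        = ∑ i ∈ Finset.range (j + 1),
            (((-1) ^ j * (j.choose i : ℂ) *
              ∑' m : ℕ, ((m.descFactorial (j - i) : ℂ) *
                (Complex.Gamma ((m : ℂ) + (β + (N : ℂ))) * c ℓ ^ m / (m.factorial : ℂ)))) / D) *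
            (V κ * ((S κ).descFactorial i : ℂ) * (-(c ℓ)) ^ (S κ)) := by
      intro κ _
      rw [hWV κ, Finset.mul_sum, Finset.mul_sum]
      apply Finset.sum_congr rfl
      intro i _
      rw [div_mul_eq_mul_div, div_mul_eq_mul_div]
      congr 1
      rw [neg_pow, pow_add]
      ring
    rw [Finset.sum_congr rfl hstep, Finset.sum_comm]
    apply Finset.sum_eq_zero
    intro i hi
    rw [← Finset.mul_sum]
    have hiℓ : i < n ℓ := by
      have := Finset.mem_range.mp hi
      omega
    have hzero : ∑ κ ∈ K, V κ * ((S κ).descFactorial i : ℂ) * (-(c ℓ)) ^ (S κ) = 0 := by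
      have hkey := key_vanish r c n ℓ i hiℓ
      simp only [hK, hS, hV]
      exact hkey
    rw [hzero, mul_zero]
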